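/- G contains a triangle if and only if S[G,t] contains a triangle, for every simple graph G and t ≥ 1. -/

import Mathlib

variable {V : Type*}

/-- Adjacency of the generalized Sierpiński graph `S(G,t)` on words of length `t`:
`u` and `v` are adjacent iff there is an index `i` with `u j = v j` for `j < i`,
`u i` adjacent to `v i` in `G`, and `u j = v i`, `v j = u i` for `j > i`. -/
def sierAdj (G : SimpleGraph V) (t : ℕ) (u v : Fin t → V) : Prop :=
  ∃ i : Fin t, (∀ j, j < i → u j = v j) ∧ G.Adj (u i) (v i) ∧
    ∀ j, i < j → u j = v i ∧ v j = u i

/-- The generalized Sierpiński graph `S(G,t)`. -/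
def sier (G : SimpleGraph V) (t : ℕ) : SimpleGraph (Fin t → V) where
  Adj := sierAdj G t
  symm := by
    refine ⟨?_⟩; rintro u v ⟨i, h1, h2, h3⟩
    exact ⟨i, fun j hj => (h1 j hj).symm, h2.symm,
      fun j hj => ⟨(h3 j hj).2, (h3 j hj).1⟩⟩
  loopless := by
    refine ⟨?_⟩; rintro u ⟨i, h1, h2, h3⟩
    exact G.loopless.irrefl _ h2

/-- `linkingAt G t p u v` : `uv` is a linking edge of `S(G,t)` appearing at
(0-indexed) position `p < t - 1`; in the paper's terminology this linking edge is
produced at step `t - p`, and its contraction is a vertex contracted at step `t - p`. -/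
def linkingAt (G : SimpleGraph V) (t p : ℕ) (u v : Fin t → V) : Prop :=
  ∃ i : Fin t, i.val = p ∧ i.val + 1 < t ∧ (∀ j, j < i → u j = v j) ∧
    G.Adj (u i) (v i) ∧ ∀ j, i < j → u j = v i ∧ v j = u i

/-- `uv` is a linking edge of `S(G,t)` (an edge appearing at some step `≥ 2`). -/
def linking (G : SimpleGraph V) (t : ℕ) (u v : Fin t → V) : Prop :=
  ∃ p, linkingAt G t p u v

/-- The equivalence relation on words generated by identifying the two endpoints
of each linking edge. -/
def gasketSetoid (G : SimpleGraph V) (t : ℕ) : Setoid (Fin t → V) :=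
  Relation.EqvGen.setoid (linking G t)

/-- The generalized Sierpiński gasket graph `S[G,t]`, obtained from `S(G,t)` by
contracting all linking edges. -/
def gasket (G : SimpleGraph V) (t : ℕ) :
    SimpleGraph (Quotient (gasketSetoid G t)) where
  Adj x y := x ≠ y ∧ ∃ u v, Quotient.mk (gasketSetoid G t) u = x ∧
    Quotient.mk (gasketSetoid G t) v = y ∧ sierAdj G t u v
  symm := by
    refine ⟨?_⟩; rintro x y ⟨hxy, u, v, hu, hv, h⟩
    exact ⟨hxy.symm, v, u, hv, hu, (sier G t).symm.symm _ _ h⟩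
  loopless := ⟨fun _ h => h.1 rfl⟩

/-- The expanded word `i j j ... j`; for `ij ∈ E(G)` its class in `S[G,t]` is the
contracted vertex `{i,j}_t`. -/
def topWord (t : ℕ) (i j : V) : Fin t → V := fun k => if k.val = 0 then i else j

section Aux

variable {G : SimpleGraph V} {t : ℕ}

/-- Repackaging of `linking`: `u` and `v` form a linking edge. -/
def linkRel (G : SimpleGraph V) (t : ℕ) (u v : Fin t → V) : Prop :=
  ∃ i : Fin t, i.val + 1 < t ∧ (∀ j, j < i → u j = v j) ∧ G.Adj (u i) (v i) ∧
    ∀ j, i < j → u j = v i ∧ v j = u i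

lemma linking_iff_linkRel {u v : Fin t → V} : linking G t u v ↔ linkRel G t u v := by
  constructor
  · rintro ⟨p, i, -, h1, h2, h3, h4⟩
    exact ⟨i, h1, h2, h3, h4⟩
  · rintro ⟨i, h1, h2, h3, h4⟩
    exact ⟨i.val, i, rfl, h1, h2, h3, h4⟩

lemma linkRel_symm {u v : Fin t → V} (h : linkRel G t u v) : linkRel G t v u := by
  obtain ⟨i, h1, h2, h3, h4⟩ := h
  exact ⟨i, h1, fun j hj => (h2 j hj).symm, h3.symm, fun j hj => ⟨(h4 j hj).2, (h4 j hj).1⟩⟩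

/-- The linking partner of a word is unique. -/
lemma linkRel_unique {w u v : Fin t → V} (h1 : linkRel G t w u) (h2 : linkRel G t w v) :
    u = v := by
  obtain ⟨i, hi, pre1, adj1, tail1⟩ := h1
  obtain ⟨i', hi', pre2, adj2, tail2⟩ := h2
  have hL : t - 1 < t := by omega
  have hiL : i < (⟨t - 1, hL⟩ : Fin t) := Fin.lt_def.mpr (show i.val < t - 1 by omega)
  have hi'L : i' < (⟨t - 1, hL⟩ : Fin t) := Fin.lt_def.mpr (show i'.val < t - 1 by omega)
  have hii : i = i' := by
    rcases lt_trichotomy i i' with h | h | h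
    · exfalso
      have e1 : w i' = u i := (tail1 i' h).1
      have e2 : w ⟨t - 1, hL⟩ = u i := (tail1 ⟨t - 1, hL⟩ hiL).1
      have e3 : w ⟨t - 1, hL⟩ = v i' := (tail2 ⟨t - 1, hL⟩ hi'L).1
      exact adj2.ne (e1.trans (e2.symm.trans e3))
    · exact h
    · exfalso
      have e1 : w i = v i' := (tail2 i h).1
      have e2 : w ⟨t - 1, hL⟩ = v i' := (tail2 ⟨t - 1, hL⟩ hi'L).1
      have e3 : w ⟨t - 1, hL⟩ = u i := (tail1 ⟨t - 1, hL⟩ hiL).1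
      exact adj1.ne (e3.symm.trans (e2.trans e1.symm)).symm
  subst hii
  funext j
  rcases lt_trichotomy j i with h | h | h
  · exact (pre1 j h).symm.trans (pre2 j h)
  · subst h
    exact ((tail1 ⟨t - 1, hL⟩ hiL).1).symm.trans (tail2 ⟨t - 1, hL⟩ hi'L).1
  · exact ((tail1 j h).2).trans ((tail2 j h).2).symm

/-- Two words represent the same vertex of the gasket iff they are equal or form a
linking edge: every class of `gasketSetoid` has at most two elements. -/
lemma mk_eq_mk_iff {u v : Fin t → V} :
    Quotient.mk (gasketSetoid G t) u = Quotient.mk (gasketSetoid G t) v ↔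
      u = v ∨ linkRel G t u v := by
  constructor
  · intro h
    have h' : Relation.EqvGen (linking G t) u v := Quotient.eq.mp h
    clear h
    induction h' with
    | rel a b hab => exact Or.inr (linking_iff_linkRel.mp hab)
    | refl a => exact Or.inl rfl
    | symm a b hab ih =>
      rcases ih with rfl | h'
      · exact Or.inl rfl
      · exact Or.inr (linkRel_symm h')
    | trans a b c h1 h2 ih1 ih2 =>
      rcases ih1 with rfl | h1'
      · exact ih2
      · rcases ih2 with rfl | h2'
        · exact Or.inr h1'
        · exact Or.inl (linkRel_unique (linkRel_symm h1') h2')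
  · rintro (rfl | h)
    · rfl
    · exact Quotient.sound (Relation.EqvGen.rel u v (linking_iff_linkRel.mpr h))

/-- A gasket edge between distinct classes comes from a sier-edge at the last index:
the two words share their length `t-1` prefix and their last letters are adjacent. -/
lemma gasket_adj_struct {x y : Quotient (gasketSetoid G t)} (L : Fin t)
    (hLval : L.val = t - 1) (h : (gasket G t).Adj x y) :
    ∃ u v : Fin t → V, Quotient.mk (gasketSetoid G t) u = x ∧
      Quotient.mk (gasketSetoid G t) v = y ∧
      (∀ j : Fin t, j.val < t - 1 → u j = v j) ∧ G.Adj (u L) (v L) := by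
  obtain ⟨hne, u, v, hu, hv, i, hpre, hadj, htail⟩ := h
  by_cases hi : i.val + 1 < t
  · exact absurd
      (hu.symm.trans ((mk_eq_mk_iff.mpr (Or.inr ⟨i, hi, hpre, hadj, htail⟩)).trans hv)) hne
  · have hieq : i = L := Fin.ext (by have := i.isLt; omega)
    rw [hieq] at hpre hadj
    exact ⟨u, v, hu, hv, fun j hj => hpre j (Fin.lt_def.mpr (by omega)), hadj⟩

/-- The word `a a ... a x`. -/
def triWord (t : ℕ) (L : Fin t) (base x : V) : Fin t → V := fun k => if k = L then x else base

end Aux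

/-- `G` contains a triangle iff `S[G,t]` contains a triangle, for every `t ≥ 1`. -/
theorem stmt_9 (G : SimpleGraph V) (t : ℕ) (ht : 1 ≤ t) :
    ¬ G.CliqueFree 3 ↔ ¬ (gasket G t).CliqueFree 3 := by
  classical
  have hL : t - 1 < t := by omega
  set L : Fin t := ⟨t - 1, hL⟩ with hLdef
  have hLval : L.val = t - 1 := rfl
  constructor
  · -- forward: a triangle in `G` gives a triangle in `S[G,t]`
    intro h hfree
    rw [SimpleGraph.CliqueFree] at h
    push_neg at h
    obtain ⟨s, hs⟩ := h
    rw [SimpleGraph.is3Clique_iff] at hs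
    obtain ⟨a, b, c, hab, hac, hbc, -⟩ := hs
    have hsier : ∀ x y : V, G.Adj x y → sierAdj G t (triWord t L a x) (triWord t L a y) := by
      intro x y hxy
      refine ⟨L, ?_, ?_, ?_⟩
      · intro j hj
        have hjL : j ≠ L := ne_of_lt hj
        simp only [triWord, if_neg hjL]
      · simpa only [triWord, if_pos rfl, ↓reduceIte] using hxy
      · intro j hj
        rw [Fin.lt_def, hLval] at hj
        exact absurd j.isLt (by omega)
    have hdist : ∀ x y : V, G.Adj x y →
        Quotient.mk (gasketSetoid G t) (triWord t L a x) ≠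
          Quotient.mk (gasketSetoid G t) (triWord t L a y) := by
      intro x y hxy heq
      rcases mk_eq_mk_iff.mp heq with h' | ⟨i, hi, -, hadj, -⟩
      · have := congrFun h' L
        simp only [triWord, if_pos rfl] at this
        exact hxy.ne this
      · have hiL : i ≠ L := by
          intro h''
          rw [h''] at hi
          rw [hLval] at hi
          omega
        simp only [triWord, if_neg hiL] at hadj
        exact G.loopless.irrefl a hadj
    have adj1 : (gasket G t).Adj (Quotient.mk (gasketSetoid G t) (triWord t L a a))
        (Quotient.mk (gasketSetoid G t) (triWord t L a b)) :=
      ⟨hdist a b hab, _, _, rfl, rfl, hsier a b hab⟩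
    have adj2 : (gasket G t).Adj (Quotient.mk (gasketSetoid G t) (triWord t L a a))
        (Quotient.mk (gasketSetoid G t) (triWord t L a c)) :=
      ⟨hdist a c hac, _, _, rfl, rfl, hsier a c hac⟩
    have adj3 : (gasket G t).Adj (Quotient.mk (gasketSetoid G t) (triWord t L a b))
        (Quotient.mk (gasketSetoid G t) (triWord t L a c)) :=
      ⟨hdist b c hbc, _, _, rfl, rfl, hsier b c hbc⟩
    exact hfree {Quotient.mk (gasketSetoid G t) (triWord t L a a),
      Quotient.mk (gasketSetoid G t) (triWord t L a b),
      Quotient.mk (gasketSetoid G t) (triWord t L a c)}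
      (SimpleGraph.is3Clique_triple_iff.mpr ⟨adj1, adj2, adj3⟩)
  · -- backward: a triangle in `S[G,t]` gives a triangle in `G`
    intro h
    have tri : ∀ x1 x2 x3 : V, G.Adj x1 x2 → G.Adj x1 x3 → G.Adj x2 x3 →
        ¬ G.CliqueFree 3 := by
      intro x1 x2 x3 h1 h2 h3 hcf
      exact hcf {x1, x2, x3} (SimpleGraph.is3Clique_triple_iff.mpr ⟨h1, h2, h3⟩)
    rw [SimpleGraph.CliqueFree] at h
    push_neg at h
    obtain ⟨s, hs⟩ := h
    rw [SimpleGraph.is3Clique_iff] at hs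
    obtain ⟨x, y, z, hxy, hxz, hyz, -⟩ := hs
    obtain ⟨u, v, hu, hv, hP, hab⟩ := gasket_adj_struct L hLval hxy
    obtain ⟨u', v', hu', hv', hP', hcd⟩ := gasket_adj_struct L hLval hyz
    obtain ⟨u'', v'', hu'', hv'', hP'', hef⟩ := gasket_adj_struct L hLval hxz
    have hX : u = u'' ∨ linkRel G t u u'' := mk_eq_mk_iff.mp (hu.trans hu''.symm)
    have hY : v = u' ∨ linkRel G t v u' := mk_eq_mk_iff.mp (hv.trans hu'.symm)
    have hZ : v' = v'' ∨ linkRel G t v' v'' := mk_eq_mk_iff.mp (hv'.trans hv''.symm)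
    rcases hX with hX | ⟨pX, hpX, hXpre, hXadj, hXtail⟩
    · rcases hY with hY | ⟨pY, hpY, hYpre, hYadj, hYtail⟩
      · rcases hZ with hZ | ⟨pZ, hpZ, hZpre, hZadj, hZtail⟩
        · -- all equal: genuine triangle at the deepest level
          have e1 : G.Adj (u L) (v' L) := by
            have h0 := hef; rw [← hX, ← hZ] at h0; exact h0
          have e2 : G.Adj (v L) (v' L) := by
            have h0 := hcd; rw [← hY] at h0; exact h0
          exact tri _ _ _ hab e1 e2
        · -- only Z linked: contradiction
          have c : v' pZ = v'' pZ :=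
            calc v' pZ = u' pZ := (hP' pZ (by omega)).symm
              _ = v pZ := by rw [hY]
              _ = u pZ := (hP pZ (by omega)).symm
              _ = u'' pZ := by rw [hX]
              _ = v'' pZ := hP'' pZ (by omega)
          exact absurd c hZadj.ne
      · rcases hZ with hZ | ⟨pZ, hpZ, hZpre, hZadj, hZtail⟩
        · -- only Y linked: contradiction
          have c : v pY = u' pY :=
            calc v pY = u pY := (hP pY (by omega)).symm
              _ = u'' pY := by rw [hX]
              _ = v'' pY := hP'' pY (by omega)
              _ = v' pY := by rw [hZ]
              _ = u' pY := (hP' pY (by omega)).symm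
          exact absurd c hYadj.ne
        · -- Y and Z linked, X equal
          have hYL : pY < L := Fin.lt_def.mpr (by omega)
          have hZL : pZ < L := Fin.lt_def.mpr (by omega)
          rcases lt_trichotomy pY pZ with h1 | h1 | h1
          · have c : v pY = u' pY :=
              calc v pY = u pY := (hP pY (by omega)).symm
                _ = u'' pY := by rw [hX]
                _ = v'' pY := hP'' pY (by omega)
                _ = v' pY := (hZpre pY h1).symm
                _ = u' pY := (hP' pY (by omega)).symm
            exact absurd c hYadj.ne
          · subst h1
            have c : u' L = v' L :=
              calc u' L = v pY := (hYtail L hYL).2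
                _ = u pY := (hP pY (by omega)).symm
                _ = u'' pY := by rw [hX]
                _ = v'' pY := hP'' pY (by omega)
                _ = v' L := ((hZtail L hZL).1).symm
            exact absurd c hcd.ne
          · have c : v' pZ = v'' pZ :=
              calc v' pZ = u' pZ := (hP' pZ (by omega)).symm
                _ = v pZ := (hYpre pZ h1).symm
                _ = u pZ := (hP pZ (by omega)).symm
                _ = u'' pZ := by rw [hX]
                _ = v'' pZ := hP'' pZ (by omega)
            exact absurd c hZadj.ne
    · have hXL : pX < L := Fin.lt_def.mpr (by omega)
      rcases hY with hY | ⟨pY, hpY, hYpre, hYadj, hYtail⟩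
      · rcases hZ with hZ | ⟨pZ, hpZ, hZpre, hZadj, hZtail⟩
        · -- only X linked: contradiction
          have c : u pX = u'' pX :=
            calc u pX = v pX := hP pX (by omega)
              _ = u' pX := by rw [hY]
              _ = v' pX := hP' pX (by omega)
              _ = v'' pX := by rw [hZ]
              _ = u'' pX := (hP'' pX (by omega)).symm
          exact absurd c hXadj.ne
        · -- X and Z linked, Y equal
          have hZL : pZ < L := Fin.lt_def.mpr (by omega)
          rcases lt_trichotomy pX pZ with h1 | h1 | h1
          · have c : u pX = u'' pX :=
              calc u pX = v pX := hP pX (by omega)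
                _ = u' pX := by rw [hY]
                _ = v' pX := hP' pX (by omega)
                _ = v'' pX := hZpre pX h1
                _ = u'' pX := (hP'' pX (by omega)).symm
            exact absurd c hXadj.ne
          · subst h1
            have c : u'' L = v'' L :=
              calc u'' L = u pX := (hXtail L hXL).2
                _ = v pX := hP pX (by omega)
                _ = u' pX := by rw [hY]
                _ = v' pX := hP' pX (by omega)
                _ = v'' L := ((hZtail L hZL).2).symm
            exact absurd c hef.ne
          · have c : v' pZ = v'' pZ :=
              calc v' pZ = u' pZ := (hP' pZ (by omega)).symm
                _ = v pZ := by rw [hY]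
                _ = u pZ := (hP pZ (by omega)).symm
                _ = u'' pZ := hXpre pZ h1
                _ = v'' pZ := hP'' pZ (by omega)
            exact absurd c hZadj.ne
      · have hYL : pY < L := Fin.lt_def.mpr (by omega)
        rcases hZ with hZ | ⟨pZ, hpZ, hZpre, hZadj, hZtail⟩
        · -- X and Y linked, Z equal
          rcases lt_trichotomy pX pY with h1 | h1 | h1
          · have c : u pX = u'' pX :=
              calc u pX = v pX := hP pX (by omega)
                _ = u' pX := hYpre pX h1
                _ = v' pX := hP' pX (by omega)
                _ = v'' pX := by rw [hZ]
                _ = u'' pX := (hP'' pX (by omega)).symm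
            exact absurd c hXadj.ne
          · subst h1
            have c : u L = v L :=
              calc u L = u'' pX := (hXtail L hXL).1
                _ = v'' pX := hP'' pX (by omega)
                _ = v' pX := by rw [hZ]
                _ = u' pX := (hP' pX (by omega)).symm
                _ = v L := ((hYtail L hYL).1).symm
            exact absurd c hab.ne
          · have c : v pY = u' pY :=
              calc v pY = u pY := (hP pY (by omega)).symm
                _ = u'' pY := hXpre pY h1
                _ = v'' pY := hP'' pY (by omega)
                _ = v' pY := by rw [hZ]
                _ = u' pY := (hP' pY (by omega)).symm
            exact absurd c hYadj.ne
        · -- all three linked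
          have hZL : pZ < L := Fin.lt_def.mpr (by omega)
          rcases lt_trichotomy pX pY with h1 | h1 | h1
          · rcases lt_trichotomy pX pZ with h2 | h2 | h2
            · have c : u pX = u'' pX :=
                calc u pX = v pX := hP pX (by omega)
                  _ = u' pX := hYpre pX h1
                  _ = v' pX := hP' pX (by omega)
                  _ = v'' pX := hZpre pX h2
                  _ = u'' pX := (hP'' pX (by omega)).symm
              exact absurd c hXadj.ne
            · subst h2
              have c : u'' L = v'' L :=
                calc u'' L = u pX := (hXtail L hXL).2
                  _ = v pX := hP pX (by omega)
                  _ = u' pX := hYpre pX h1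
                  _ = v' pX := hP' pX (by omega)
                  _ = v'' L := ((hZtail L hZL).2).symm
              exact absurd c hef.ne
            · have c : v' pZ = v'' pZ :=
                calc v' pZ = u' pZ := (hP' pZ (by omega)).symm
                  _ = v pZ := (hYpre pZ (h2.trans h1)).symm
                  _ = u pZ := (hP pZ (by omega)).symm
                  _ = u'' pZ := hXpre pZ h2
                  _ = v'' pZ := hP'' pZ (by omega)
              exact absurd c hZadj.ne
          · subst h1
            rcases lt_trichotomy pX pZ with h2 | h2 | h2
            · have c : u L = v L :=
                calc u L = u'' pX := (hXtail L hXL).1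
                  _ = u pZ := ((hXtail pZ h2).1).symm
                  _ = v pZ := hP pZ (by omega)
                  _ = u' pX := (hYtail pZ h2).1
                  _ = v L := ((hYtail L hYL).1).symm
              exact absurd c hab.ne
            · subst h2
              -- the triangle case: all three classes are contracted at the same position
              have eA : v' L = u L :=
                calc v' L = v'' pX := (hZtail L hZL).1
                  _ = u'' pX := (hP'' pX (by omega)).symm
                  _ = u L := ((hXtail L hXL).1).symm
              have eB : v'' L = v L :=
                calc v'' L = v' pX := (hZtail L hZL).2
                  _ = u' pX := (hP' pX (by omega)).symm
                  _ = v L := ((hYtail L hYL).1).symm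
              have eC : u'' L = u' L :=
                calc u'' L = u pX := (hXtail L hXL).2
                  _ = v pX := hP pX (by omega)
                  _ = u' L := ((hYtail L hYL).2).symm
              have t1 : G.Adj (u' L) (u L) := by
                have h0 := hcd; rw [eA] at h0; exact h0
              have t2 : G.Adj (u' L) (v L) := by
                have h0 := hef; rw [eB, eC] at h0; exact h0
              exact tri _ _ _ t1 t2 hab
            · have c : v' pZ = v'' pZ :=
                calc v' pZ = u' pZ := (hP' pZ (by omega)).symm
                  _ = v pZ := (hYpre pZ h2).symm
                  _ = u pZ := (hP pZ (by omega)).symm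
                  _ = u'' pZ := hXpre pZ h2
                  _ = v'' pZ := hP'' pZ (by omega)
              exact absurd c hZadj.ne
          · rcases lt_trichotomy pY pZ with h2 | h2 | h2
            · have c : v pY = u' pY :=
                calc v pY = u pY := (hP pY (by omega)).symm
                  _ = u'' pY := hXpre pY h1
                  _ = v'' pY := hP'' pY (by omega)
                  _ = v' pY := (hZpre pY h2).symm
                  _ = u' pY := (hP' pY (by omega)).symm
              exact absurd c hYadj.ne
            · subst h2
              have c : u' L = v' L :=
                calc u' L = v pY := (hYtail L hYL).2
                  _ = u pY := (hP pY (by omega)).symm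
                  _ = u'' pY := hXpre pY h1
                  _ = v'' pY := hP'' pY (by omega)
                  _ = v' L := ((hZtail L hZL).1).symm
              exact absurd c hcd.ne
            · have c : v' pZ = v'' pZ :=
                calc v' pZ = u' pZ := (hP' pZ (by omega)).symm
                  _ = v pZ := (hYpre pZ h2).symm
                  _ = u pZ := (hP pZ (by omega)).symm
                  _ = u'' pZ := hXpre pZ (h2.trans h1)
                  _ = v'' pZ := hP'' pZ (by omega)
              exact absurd c hZadj.ne
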